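/- For n ≥ 2 identical linear servers and any attack strength α ≥ 0 and any machine penetration level r ∈ [0, n], every team equilibrium x̃ satisfies C^α(x̃) ≤ 1 + α/n; that is, the system exhibits weak emergent security against the unresponsive baseline profile x̄ = (1, …, 1) whose cost is C^α(x̄) = 1 + α/n. -/

import Mathlib

open Finset

/-- System cost `C^α(x) = (1/n) ∑ᵢ xᵢ τᵢ(xᵢ) + α x₁ / n` (server 1 is index 0). -/
noncomputable def cost (n : ℕ) [NeZero n] (τ : Fin n → ℝ → ℝ) (α : ℝ) (x : Fin n → ℝ) : ℝ :=
  (∑ i, x i * τ i (x i)) / (n : ℝ) + α * x 0 / (n : ℝ)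

/-- Attacked delay functions: `τ₁^α = τ₁ + α`, `τᵢ^α = τᵢ` for `i > 1`. -/
noncomputable def tauA (n : ℕ) [NeZero n] (τ : Fin n → ℝ → ℝ) (α : ℝ) (i : Fin n) (z : ℝ) : ℝ :=
  τ i z + if i = 0 then α else 0

/-- A (partial) scheduling profile of total mass `mass`: nonnegative with entries summing to `mass`. -/
def IsProfile (n : ℕ) (mass : ℝ) (x : Fin n → ℝ) : Prop :=
  (∀ i, 0 ≤ x i) ∧ ∑ i, x i = mass

/-- Team equilibrium: the selfish mass `n - ∑ r k` is scheduled by `xs`, machine `k`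
schedules mass `r k` via `xk k`; every machine schedules globally optimally given the
others, and every selfish job is on a minimum-delay server. -/
def IsTeamEq (n m : ℕ) [NeZero n] (τ : Fin n → ℝ → ℝ) (α : ℝ) (r : Fin m → ℝ)
    (xs : Fin n → ℝ) (xk : Fin m → Fin n → ℝ) : Prop :=
  IsProfile n ((n : ℝ) - ∑ k, r k) xs ∧
  (∀ k, IsProfile n (r k) (xk k)) ∧
  (∀ k, ∀ y : Fin n → ℝ, IsProfile n (r k) y →
    cost n τ α (xs + ∑ j, xk j) ≤ cost n τ α (xs + y + ∑ j ∈ univ.erase k, xk j)) ∧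
  (∀ i, 0 < xs i → ∀ j,
    tauA n τ α i ((xs + ∑ l, xk l) i) ≤ tauA n τ α j ((xs + ∑ l, xk l) j))

/-- Identical linear delay functions `τᵢ(x) = x`. -/
def lin (n : ℕ) : Fin n → ℝ → ℝ := fun _ z => z

/-- weak emergent security for identical linear servers: every team
equilibrium costs at most the unresponsive baseline cost `C^α((1,…,1)) = 1 + α/n`. -/
lemma sum_sq_shift {n : ℕ} (x : Fin n → ℝ) (i j : Fin n) (hij : i ≠ j) (ε : ℝ) :
    ∑ l, ((x l + ((if l = j then ε else 0) - if l = i then ε else 0)) *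
          (x l + ((if l = j then ε else 0) - if l = i then ε else 0)))
      = (∑ l, x l * x l) + (2 * ε * (x j - x i) + 2 * ε ^ 2) := by
  have expand : ∀ l ∈ univ, (x l + ((if l = j then ε else 0) - if l = i then ε else 0)) *
          (x l + ((if l = j then ε else 0) - if l = i then ε else 0))
      = x l * x l + ((if l = j then 2*ε*x j + ε^2 else 0) + (if l = i then -(2*ε*x i) + ε^2 else 0)) := by
    intro l _
    by_cases hj : l = j <;> by_cases hi : l = i
    · exact absurd (hi.symm.trans hj) hij
    · subst hj; simp [hi]; ring
    · subst hi; simp [hj]; ring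
    · simp [hi, hj]
  rw [Finset.sum_congr rfl expand, Finset.sum_add_distrib, Finset.sum_add_distrib,
    Finset.sum_ite_eq', Finset.sum_ite_eq']
  simp; ring

theorem linear_weak_emergent_security (n m : ℕ) [NeZero n] (hn : 2 ≤ n) (hm : 1 ≤ m)
    (α : ℝ) (hα : 0 ≤ α)
    (r : Fin m → ℝ) (hr : ∀ k, 0 ≤ r k)
    (hr0 : 0 ≤ ∑ k, r k) (hrsum : ∑ k, r k ≤ (n : ℝ)) :
    cost n (lin n) α (fun _ : Fin n => (1 : ℝ)) = 1 + α / n ∧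
    ∀ (xs : Fin n → ℝ) (xk : Fin m → Fin n → ℝ), IsTeamEq n m (lin n) α r xs xk →
      cost n (lin n) α (xs + ∑ j, xk j) ≤ 1 + α / n := by
  have hn0 : (0:ℝ) < n := by positivity
  have hnne : (n:ℝ) ≠ 0 := ne_of_gt hn0
  have hn2 : (2:ℝ) ≤ (n:ℝ) := by exact_mod_cast hn
  constructor
  · simp [cost, lin]
  · rintro xs xk ⟨⟨hxs0, hxssum⟩, hxk, hopt, hself⟩
    set X : Fin n → ℝ := xs + ∑ j, xk j with hXdef
    have hXapp : ∀ i, X i = xs i + ∑ k, xk k i := by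
      intro i; simp [hXdef, Finset.sum_apply]
    have hX0 : ∀ i, 0 ≤ X i := by
      intro i; rw [hXapp]
      exact add_nonneg (hxs0 i) (Finset.sum_nonneg fun k _ => (hxk k).1 i)
    have hXsum : ∑ i, X i = (n : ℝ) := by
      have h1 : ∑ i, X i = ∑ i, xs i + ∑ i, ∑ k, xk k i := by
        simp [hXapp, Finset.sum_add_distrib]
      have h2 : ∑ k : Fin m, ∑ i, xk k i = ∑ k, r k :=
        Finset.sum_congr rfl fun k _ => (hxk k).2
      rw [h1, Finset.sum_comm, hxssum, h2]; ring
    -- machine marginal condition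
    have hmach : ∀ k i j, i ≠ j → 0 < xk k i →
        2 * X i + (if i = 0 then α else 0) ≤ 2 * X j + (if j = 0 then α else 0) := by
      intro k i j hij hpos
      apply le_of_forall_pos_le_add
      intro ε' hε'
      set ε : ℝ := min (ε'/2) (xk k i) with hεdef
      have hεpos : 0 < ε := lt_min (by linarith) hpos
      have hεle : ε ≤ xk k i := min_le_right _ _
      have hεle' : 2 * ε ≤ ε' := by
        have := min_le_left (ε'/2) (xk k i); linarith [this]
      set y : Fin n → ℝ := fun l => xk k l + ((if l = j then ε else 0) - if l = i then ε else 0) with hydef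
      have hyprof : IsProfile n (r k) y := by
        constructor
        · intro l
          by_cases hj : l = j <;> by_cases hi : l = i
          · exact absurd (hi.symm.trans hj) hij
          · subst hj; simp [hydef, Ne.symm hij]
            linarith [(hxk k).1 l, hεpos.le]
          · subst hi; simp [hydef, hj]; linarith [hεle]
          · simp [hydef, hj, hi]; exact (hxk k).1 l
        · rw [hydef]
          rw [Finset.sum_add_distrib, Finset.sum_sub_distrib, Finset.sum_ite_eq', Finset.sum_ite_eq']
          simp [(hxk k).2]
      have hkey := hopt k y hyprof
      have hXshift : (xs + y + ∑ j ∈ univ.erase k, xk j)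
          = fun l => X l + ((if l = j then ε else 0) - if l = i then ε else 0) := by
        funext l
        have herase : xk k l + ∑ j ∈ univ.erase k, xk j l = ∑ j, xk j l :=
          Finset.add_sum_erase univ (fun j => xk j l) (mem_univ k)
        simp only [Pi.add_apply, Finset.sum_apply, hydef, hXapp]
        rw [← herase]; ring
      rw [hXshift] at hkey
      have hcost : cost n (lin n) α (fun l => X l + ((if l = j then ε else 0) - if l = i then ε else 0))
          = cost n (lin n) α X
            + (2 * ε * (X j - X i) + 2 * ε ^ 2
               + α * ((if (0:Fin n) = j then ε else 0) - if (0:Fin n) = i then ε else 0)) / n := by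
        simp only [cost, lin]
        rw [sum_sq_shift X i j hij ε]
        field_simp
        ring
      rw [hcost] at hkey
      have hD : 0 ≤ 2 * ε * (X j - X i) + 2 * ε ^ 2
          + α * ((if (0:Fin n) = j then ε else 0) - if (0:Fin n) = i then ε else 0) := by
        by_contra hneg
        push_neg at hneg
        have : (2 * ε * (X j - X i) + 2 * ε ^ 2
          + α * ((if (0:Fin n) = j then ε else 0) - if (0:Fin n) = i then ε else 0)) / n < 0 :=
          div_neg_of_neg_of_pos hneg hn0
        linarith
      have hite1 : (if (0:Fin n) = j then ε else 0) = ε * (if j = 0 then 1 else 0) := by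
        by_cases h : j = 0 <;> simp [h, eq_comm]
      have hite2 : (if (0:Fin n) = i then ε else 0) = ε * (if i = 0 then 1 else 0) := by
        by_cases h : i = 0 <;> simp [h, eq_comm]
      rw [hite1, hite2] at hD
      have hε2 : 0 ≤ 2 * (X j - X i) + 2 * ε
          + α * ((if j = 0 then (1:ℝ) else 0) - if i = 0 then (1:ℝ) else 0) := by
        rcases le_or_gt 0 (2 * (X j - X i) + 2 * ε
          + α * ((if j = 0 then (1:ℝ) else 0) - if i = 0 then (1:ℝ) else 0)) with h | h
        · exact h
        · exfalso; nlinarith [mul_pos hεpos (neg_pos.mpr h)]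
      have e1 : (if i = 0 then α else 0) = α * (if i = 0 then (1:ℝ) else 0) := by
        by_cases h : i = 0 <;> simp [h]
      have e2 : (if j = 0 then α else 0) = α * (if j = 0 then (1:ℝ) else 0) := by
        by_cases h : j = 0 <;> simp [h]
      rw [e1, e2]; linarith
    -- selfish marginal condition
    have hselfish : ∀ i, 0 < xs i → ∀ j,
        X i + (if i = 0 then α else 0) ≤ X j + (if j = 0 then α else 0) := by
      intro i hi j
      have := hself i hi j
      simpa [tauA, lin, hXdef] using this
    have hα_ite : ∀ j : Fin n, 0 ≤ (if j = 0 then α else 0) := by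
      intro j; by_cases h : j = 0 <;> simp [h, hα]
    -- the key structural inequality
    have diamond : ∀ i j, 0 < X i → X i ≤ X j + (if j = 0 then α else 0) := by
      intro i j hXi
      by_cases hij : i = j
      · rw [hij]; linarith [hα_ite j]
      have hsrc : 0 < xs i ∨ ∃ k, 0 < xk k i := by
        by_contra h
        push_neg at h
        obtain ⟨h1, h2⟩ := h
        have hs : ∑ k : Fin m, xk k i ≤ 0 := Finset.sum_nonpos fun k _ => h2 k
        rw [hXapp] at hXi; linarith
      rcases hsrc with h | ⟨k, hk⟩
      · have := hselfish i h j; linarith [hα_ite i]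
      · have := hmach k i j hij hk; linarith [hα_ite i, hα_ite j]
    -- all servers except 0 carry equal positive load c
    have hj1 : (⟨1, by omega⟩ : Fin n) ≠ 0 := by
      intro h; exact absurd (congrArg Fin.val h) (by simp)
    set j1 : Fin n := ⟨1, by omega⟩ with hj1def
    have hc : 0 < X j1 := by
      rcases (hX0 j1).lt_or_eq with h | h
      · exact h
      exfalso
      have hall : ∀ i, X i = 0 := by
        intro i
        by_contra hne
        have hpos : 0 < X i := lt_of_le_of_ne (hX0 i) (Ne.symm hne)
        have := diamond i j1 hpos
        simp [hj1] at this
        linarith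
      rw [Finset.sum_congr rfl (fun i _ => hall i)] at hXsum
      simp at hXsum
      linarith
    set a : ℝ := X 0 with hadef
    set c : ℝ := X j1 with hcdef
    have heqc : ∀ j, j ≠ (0 : Fin n) → X j = c := by
      intro j hj
      have h1 : 0 < X j := by
        by_contra h
        push_neg at h
        have := diamond j1 j hc
        simp [hj] at this
        linarith
      have h2 := diamond j j1 h1
      have h3 := diamond j1 j hc
      simp [hj1, hj] at h2 h3
      linarith
    have ha0 : 0 ≤ a := hX0 0
    have hac : a ≤ c := by
      rcases ha0.lt_or_eq with h | h
      · have := diamond 0 j1 h; simpa [hj1] using this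
      · linarith [hc]
    have hca : c ≤ a + α := by
      have := diamond j1 0 hc; simpa using this
    have hXform : ∀ i, X i = c + (if i = 0 then a - c else 0) := by
      intro i
      by_cases h : i = 0
      · subst h; simp; rfl
      · simp [h, heqc i h]
    have hsum2 : (n:ℝ) * c + (a - c) = n := by
      have h1 : ∑ i, X i = ∑ i : Fin n, (c + if i = 0 then a - c else 0) :=
        Finset.sum_congr rfl fun i _ => hXform i
      rw [h1, Finset.sum_add_distrib, Finset.sum_ite_eq', Finset.sum_const] at hXsum
      simpa [card_univ, nsmul_eq_mul] using hXsum
    have hsq : ∑ i, X i * X i = (n:ℝ) * (c * c) + (a * a - c * c) := by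
      have h1 : ∀ i ∈ univ, X i * X i = c * c + if i = 0 then a * a - c * c else 0 := by
        intro i _
        by_cases h : i = 0
        · subst h; rw [if_pos rfl, ← hadef]; ring
        · simp [h, heqc i h]
      rw [Finset.sum_congr rfl h1, Finset.sum_add_distrib, Finset.sum_ite_eq', Finset.sum_const]
      simp [card_univ, nsmul_eq_mul]
    -- conclude
    have hnum : (n:ℝ) * (c * c) + (a * a - c * c) + α * a ≤ (n:ℝ) + α := by
      have hc1 : 1 ≤ c := by nlinarith
      have hnc : (n:ℝ) * c ≤ (n:ℝ) + α := by nlinarith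
      have hae : a = (n:ℝ) - n * c + c := by linarith
      rw [hae]
      nlinarith [mul_nonneg (mul_nonneg (by linarith : (0:ℝ) ≤ (n:ℝ) - 1)
        (by linarith : (0:ℝ) ≤ c - 1)) (by linarith : (0:ℝ) ≤ (n:ℝ) + α - n * c)]
    simp only [cost, lin]
    rw [hsq]
    have hX0a : X 0 = a := rfl
    rw [hX0a]
    rw [← add_div]
    have hrhs : 1 + α / n = ((n:ℝ) + α) / n := by field_simp
    rw [hrhs]
    exact (div_le_div_iff_of_pos_right hn0).mpr hnum
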